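/- Let λ, μ be integer sequences and D a valid set of pairs. If (j, j+1) ∈ D and for each h > j+1, (j,h) ∈ D iff (j+1,h) ∈ D, then for integers r, s with r + s > 2k: T(D, (λ, r, s, μ)) = −T(D, (λ, s, r, μ)). In particular T(D, (λ, r, r, μ)) = 0 for any r > k. -/

import Mathlib

/-!
STATEMENT 9 (Lemma `commuteC`).  Same setup as Statement 8 (ring with classes
`c r`, `c 0 = 1`, `c r = 0` for `r < 0`, satisfying the quadratic relations for
`r > k`; `T(D,λ) = 2^{-#diag(D)} R^D c_λ`).  If `D` is a valid set of pairs with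
`(j, j+1) ∈ D` and, for each `h > j+1`, `(j,h) ∈ D ↔ (j+1,h) ∈ D`, then for any
integers `r, s` with `r + s > 2k`:
`T(D, (λ, r, s, μ)) = -T(D, (λ, s, r, μ))`; in particular
`T(D, (λ, r, r, μ)) = 0` for `r > k`.
-/

namespace Stmt9

noncomputable section

def rapply {L : ℕ} (nn : Fin L → Fin L → ℕ) (lam : Fin L → ℤ) : Fin L → ℤ :=
  fun p => lam p + (∑ j, (nn p j : ℤ)) - ∑ h, (nn h p : ℤ)

def pairCoef {L : ℕ} (D : Finset (Fin L × Fin L)) (i j : Fin L) (m : ℕ) : ℚ :=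
  if i < j then
    (if (i, j) ∈ D then (if m = 0 then 1 else 2 * (-1 : ℚ) ^ m)
     else (if m = 0 then 1 else if m = 1 then -1 else 0))
  else (if m = 0 then 1 else 0)

def coefRD {L : ℕ} (D : Finset (Fin L × Fin L)) (nn : Fin L → Fin L → ℕ) : ℚ :=
  ∏ i, ∏ j, pairCoef D i j (nn i j)

def T {R : Type*} [CommRing R] [Algebra ℚ R] {L : ℕ}
    (c : ℤ → R) (D : Finset (Fin L × Fin L)) (lam : Fin L → ℤ) : R :=
  ((2 : ℚ) ^ (D.filter fun p => p.1 = p.2).card)⁻¹ •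
    ∑ᶠ nn : Fin L → Fin L → ℕ, coefRD D nn • ∏ i, c (rapply nn lam i)

def ValidPairs {L : ℕ} (D : Finset (Fin L × Fin L)) : Prop :=
  ∀ p ∈ D, p.1 ≤ p.2 ∧
    ∀ q : Fin L × Fin L, q.1 ≤ q.2 → q.1 ≤ p.1 → q.2 ≤ p.2 → q ∈ D

end

end Stmt9

namespace Stmt9Aux
open Finset Stmt9

noncomputable section

def sg (a : ℤ) : ℚ := if Even a then 1 else -1

def eps (m : ℕ) : ℚ := if m = 0 then 1 else 2 * (-1 : ℚ) ^ m

def ee (a : ℤ) : ℚ := if a < 0 then 0 else if a = 0 then 1 else 2 * sg a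

lemma sg_natCast (m : ℕ) : sg (m : ℤ) = (-1 : ℚ) ^ m := by
  unfold sg
  rcases Nat.even_or_odd m with h | h
  · rw [if_pos ((Int.even_coe_nat m).2 h), h.neg_one_pow]
  · rw [if_neg (by simpa [Int.not_even_iff_odd] using (Int.odd_coe_nat m).2 h), h.neg_one_pow]

lemma sg_add (a b : ℤ) : sg (a + b) = sg a * sg b := by
  unfold sg
  by_cases ha : Even a <;> by_cases hb : Even b <;>
    simp [Int.even_add, ha, hb]

lemma sg_neg (a : ℤ) : sg (-a) = sg a := by
  unfold sg; simp

lemma sg_sub (a b : ℤ) : sg (a - b) = sg a * sg b := by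
  rw [sub_eq_add_neg, sg_add, sg_neg]

lemma sg_mul_self (a : ℤ) : sg a * sg a = 1 := by
  unfold sg; by_cases h : Even a <;> simp [h]

lemma ee_natCast (m : ℕ) : ee (m : ℤ) = eps m := by
  unfold ee eps
  rcases Nat.eq_zero_or_pos m with rfl | hm
  · simp
  · rw [if_neg (by exact_mod_cast Nat.not_lt.2 (Nat.zero_le m)), if_neg, if_neg hm.ne',
      sg_natCast]
    exact_mod_cast hm.ne'

lemma ee_add_neg (a : ℤ) : ee a + ee (-a) = 2 * sg a := by
  unfold ee
  rcases lt_trichotomy a 0 with h | rfl | h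
  · rw [if_pos h, if_neg (by omega), if_neg (by omega), sg_neg]; ring
  · norm_num [sg]
  · rw [if_neg (by omega : ¬ a < 0), if_neg h.ne', if_pos (by omega : -a < 0)]; ring

lemma eps_ne_zero (m : ℕ) : eps m ≠ 0 := by
  unfold eps
  rcases Nat.eq_zero_or_pos m with rfl | hm
  · norm_num
  · rw [if_neg hm.ne']
    rcases Nat.even_or_odd m with h | h <;> simp [h.neg_one_pow]

lemma eps_zero : eps 0 = 1 := by simp [eps]

lemma eps_id (w : ℕ) (hw : w ≠ 0) :
    ∑ t ∈ range (w + 1), eps t * eps (w - t) * (-1 : ℚ) ^ t = 0 := by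
  obtain ⟨w, rfl⟩ := Nat.exists_eq_succ_of_ne_zero hw
  rw [Finset.sum_range_succ', Finset.sum_range_succ]
  have h1 : ∀ t ∈ range w, eps (t + 1) * eps (w + 1 - (t + 1)) * (-1 : ℚ) ^ (t + 1)
      = 4 * (-1 : ℚ) ^ (w - t) := by
    intro t ht
    rw [mem_range] at ht
    have h2 : w + 1 - (t + 1) = w - t := by omega
    have h3 : w - t ≠ 0 := by omega
    rw [h2, eps, eps, if_neg (Nat.succ_ne_zero t), if_neg h3]
    have hsq : (-1 : ℚ) ^ (t + 1) * (-1) ^ (t + 1) = 1 := by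
      rw [← pow_add]; exact Even.neg_one_pow ⟨t + 1, by ring⟩
    linear_combination (4 * (-1 : ℚ) ^ (w - t)) * hsq
  rw [Finset.sum_congr rfl h1]
  have h4 : ∑ t ∈ range w, 4 * (-1 : ℚ) ^ (w - t) = 4 * ∑ t ∈ range w, (-1 : ℚ) ^ (w - t) := by
    rw [Finset.mul_sum]
  have h5 : ∑ t ∈ range w, (-1 : ℚ) ^ (w - t) = -∑ t ∈ range w, (-1 : ℚ) ^ t := by
    rw [← Finset.sum_range_reflect, ← Finset.sum_neg_distrib]
    refine Finset.sum_congr rfl fun t ht => ?_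
    rw [mem_range] at ht
    have hh : w - (w - 1 - t) = t + 1 := by omega
    rw [hh, pow_succ]; ring
  rw [h4, h5, neg_one_geom_sum]
  have e0 : eps 0 = 1 := eps_zero
  have ew : eps (w + 1) = 2 * (-1 : ℚ) ^ (w + 1) := by rw [eps, if_neg (Nat.succ_ne_zero w)]
  have hw1 : w + 1 - 0 = w + 1 := rfl
  have hww : w + 1 - (w + 1) = 0 := by omega
  rw [hw1, hww, e0, ew]
  rcases Nat.even_or_odd w with h | h
  · rw [if_pos h, Odd.neg_one_pow (by simpa using h.add_one)]
    ring
  · rw [if_neg (by simpa [Nat.not_even_iff_odd] using h),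
      Even.neg_one_pow (by simpa using h.add_one)]
    ring

section
variable {R : Type*} [CommRing R] [Algebra ℚ R] (c : ℤ → R) (k : ℕ)

lemma qsmul_eq_zero {q : ℚ} {z : R} (hq : q ≠ 0) (h : q • z = 0) : z = 0 := by
  have h2 := congrArg (fun t => q⁻¹ • t) h
  simpa [smul_smul, inv_mul_cancel₀ hq] using h2

lemma qsmul_cancel {q : ℚ} {z z' : R} (hq : q ≠ 0) (h : q • z = q • z') : z = z' := by
  have h2 : q • (z - z') = 0 := by rw [smul_sub, h, sub_self]
  exact sub_eq_zero.1 (qsmul_eq_zero hq h2)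

def FF (A B : ℤ) : R := ∑ a ∈ Icc 0 (A + B), ee (a - A) • (c a * c (A + B - a))

def GG (n : ℤ) : R := ∑ a ∈ Icc 0 n, sg a • (c a * c (n - a))

lemma reflect (n : ℤ) (q : ℤ → ℚ) :
    ∑ a ∈ Icc 0 n, q a • (c a * c (n - a)) = ∑ a ∈ Icc 0 n, q (n - a) • (c a * c (n - a)) := by
  refine Finset.sum_nbij' (fun a => n - a) (fun a => n - a) ?_ ?_ ?_ ?_ ?_
  · intro a ha; simp only [mem_Icc] at ha ⊢; omega
  · intro a ha; simp only [mem_Icc] at ha ⊢; omega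
  · intro a _; omega
  · intro a _; omega
  · intro a _
    have h1 : n - (n - a) = a := by omega
    rw [h1, mul_comm]

lemma FFQ (hcneg : ∀ t : ℤ, t < 0 → c t = 0) (A B : ℤ) (Z : R) (M : ℕ) (hM : B < (M : ℤ)) :
    ∑ m ∈ range M, eps m • (c (A + m) * c (B - m) * Z) = FF c A B * Z := by
  classical
  set n := A + B with hn
  have hRHS : FF c A B * Z = ∑ a ∈ Icc 0 n, ee (a - A) • (c a * c (n - a) * Z) := by
    rw [FF, Finset.sum_mul]
    exact Finset.sum_congr rfl fun a _ => by rw [smul_mul_assoc, mul_assoc]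
  set f : ℤ → R := fun a => ee (a - A) • (c a * c (n - a) * Z) with hf
  set S₁ := (range M).map (⟨fun m : ℕ => A + (m : ℤ), fun m₁ m₂ h => by dsimp only at h; omega⟩ : ℕ ↪ ℤ)
    with hS₁
  have hLHS : ∑ m ∈ range M, eps m • (c (A + m) * c (B - m) * Z) = ∑ a ∈ S₁, f a := by
    rw [hS₁, Finset.sum_map]
    refine Finset.sum_congr rfl fun m _ => ?_
    simp only [Function.Embedding.coeFn_mk, hf]
    have h1 : A + (m : ℤ) - A = (m : ℤ) := by omega
    have h2 : n - (A + (m : ℤ)) = B - m := by omega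
    show eps m • (c (A + m) * c (B - m) * Z) = ee (A + (m : ℤ) - A) • (c (A + (m : ℤ)) * c (n - (A + (m : ℤ))) * Z)
    rw [h1, h2, ee_natCast]
  have hmem : ∀ a : ℤ, a ∈ S₁ ↔ ∃ m : ℕ, m < M ∧ a = A + m := by
    intro a
    simp only [hS₁, Finset.mem_map, Function.Embedding.coeFn_mk, mem_range]
    constructor
    · rintro ⟨m, hm, hm2⟩; exact ⟨m, hm, hm2.symm⟩
    · rintro ⟨m, hm, hm2⟩; exact ⟨m, hm, hm2.symm⟩
  have hz1 : ∀ a ∈ S₁ ∪ Icc 0 n, a ∉ S₁ → f a = 0 := by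
    intro a ha haS
    rcases lt_or_ge a A with h | h
    · have h2 : a - A < 0 := by omega
      have h3 : ee (a - A) = 0 := by rw [ee, if_pos h2]
      simp [hf, h3]
    · exfalso
      apply haS
      rw [hmem]
      refine ⟨(a - A).toNat, ?_, by omega⟩
      rw [Finset.mem_union] at ha
      rcases ha with ha | ha
      · exact absurd ha haS
      · rw [mem_Icc] at ha; omega
  have hz2 : ∀ a ∈ S₁ ∪ Icc 0 n, a ∉ Icc 0 n → f a = 0 := by
    intro a _ haI
    rw [mem_Icc] at haI
    push_neg at haI
    rcases lt_or_ge a 0 with h | h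
    · simp [hf, hcneg a h]
    · have h2 : n - a < 0 := by have := haI h; omega
      simp [hf, hcneg _ h2]
  rw [hLHS, hRHS]
  rw [Finset.sum_subset Finset.subset_union_left hz1,
    Finset.sum_subset Finset.subset_union_right hz2]

lemma Psi (u v : ℤ) : FF c u v + FF c v u = (sg u + sg v) • GG c (u + v) := by
  set n := u + v with hn
  have h1 : FF c u v = ∑ a ∈ Icc 0 n, ee (a - u) • (c a * c (n - a)) := rfl
  have h2 : FF c v u = ∑ a ∈ Icc 0 n, ee (a - v) • (c a * c (n - a)) := by
    rw [FF, show v + u = n from by omega]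
  have hS : FF c u v + FF c v u
      = ∑ a ∈ Icc 0 n, (ee (a - u) + ee (a - v)) • (c a * c (n - a)) := by
    rw [h1, h2, ← Finset.sum_add_distrib]
    exact Finset.sum_congr rfl fun a _ => (add_smul _ _ _).symm
  have hS2 : FF c u v + FF c v u
      = ∑ a ∈ Icc 0 n, (ee (v - a) + ee (u - a)) • (c a * c (n - a)) := by
    rw [hS, reflect c n (fun a => ee (a - u) + ee (a - v))]
    refine Finset.sum_congr rfl fun a _ => ?_
    have e1 : n - a - u = v - a := by omega
    have e2 : n - a - v = u - a := by omega
    rw [e1, e2]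
  have hdbl : (2 : ℚ) • (FF c u v + FF c v u) = (2 : ℚ) • ((sg u + sg v) • GG c n) := by
    have h3 : (2 : ℚ) • (FF c u v + FF c v u)
        = (FF c u v + FF c v u) + (FF c u v + FF c v u) := two_smul _ _
    rw [h3]
    nth_rewrite 2 [hS2]
    nth_rewrite 1 [hS]
    rw [← Finset.sum_add_distrib, GG, Finset.smul_sum, Finset.smul_sum]
    refine Finset.sum_congr rfl fun a _ => ?_
    rw [← add_smul, smul_smul, smul_smul]
    congr 1
    have ha := ee_add_neg (a - u)
    have hb := ee_add_neg (a - v)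
    rw [sg_sub] at ha hb
    rw [show v - a = -(a - v) from by ring, show u - a = -(a - u) from by ring]
    linear_combination ha + hb
  exact qsmul_cancel two_ne_zero hdbl

lemma GG_eq_zero (hcneg : ∀ t : ℤ, t < 0 → c t = 0)
    (hrel : ∀ r : ℤ, (k : ℤ) < r →
      c r ^ 2 + 2 * ∑ i ∈ Icc (1 : ℤ) r, (-1) ^ i.toNat * c (r + i) * c (r - i) = 0)
    (n : ℤ) (hn : 2 * (k : ℤ) < n) : GG c n = 0 := by
  have hk0 : (0 : ℤ) ≤ k := Int.natCast_nonneg k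
  rcases Int.even_or_odd n with ⟨t, ht⟩ | hodd
  · have htk : (k : ℤ) < t := by omega
    have ht1 : 1 ≤ t := by omega
    have hmap : Icc (0 : ℤ) n = (Icc (-t) t).map (addLeftEmbedding t) := by
      rw [Finset.map_add_left_Icc]
      congr 1 <;> omega
    have h1 : GG c n = ∑ b ∈ Icc (-t) t, sg (t + b) • (c (t + b) * c (t - b)) := by
      rw [GG, hmap, Finset.sum_map]
      refine Finset.sum_congr rfl fun b _ => ?_
      have hemb : addLeftEmbedding t b = t + b := rfl
      rw [hemb, show n - (t + b) = t - b from by omega]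
    have h2 : GG c n = sg t • ∑ b ∈ Icc (-t) t, sg b • (c (t + b) * c (t - b)) := by
      rw [h1, Finset.smul_sum]
      refine Finset.sum_congr rfl fun b _ => ?_
      rw [smul_smul, sg_add]
    have hsplit : Icc (-t) t = Icc (-t) (-1) ∪ Icc 0 t := by
      ext x; simp only [Finset.mem_union, mem_Icc]; omega
    have hdisj : Disjoint (Icc (-t : ℤ) (-1)) (Icc 0 t) := by
      rw [Finset.disjoint_left]
      intro x hx hx2; rw [mem_Icc] at hx hx2; omega
    have hneg : ∑ b ∈ Icc (-t : ℤ) (-1), sg b • (c (t + b) * c (t - b))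
        = ∑ b ∈ Icc (1 : ℤ) t, sg b • (c (t + b) * c (t - b)) := by
      refine Finset.sum_nbij' (fun b => -b) (fun b => -b) ?_ ?_ ?_ ?_ ?_
      · intro b hb; simp only [mem_Icc] at hb ⊢; omega
      · intro b hb; simp only [mem_Icc] at hb ⊢; omega
      · intro b _; omega
      · intro b _; omega
      · intro b _
        rw [sg_neg, show t + -b = t - b from by ring, show t - -b = t + b from by ring, mul_comm]
    have hIcc0 : Icc (0 : ℤ) t = insert 0 (Icc 1 t) := by
      ext x; simp only [Finset.mem_insert, mem_Icc]; omega
    have hH2 : ∑ b ∈ Icc (-t) t, sg b • (c (t + b) * c (t - b))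
        = c t * c t + 2 • ∑ b ∈ Icc (1 : ℤ) t, sg b • (c (t + b) * c (t - b)) := by
      rw [hsplit, Finset.sum_union hdisj, hneg, hIcc0, Finset.sum_insert (by simp)]
      have h0 : sg 0 • (c (t + 0) * c (t - 0)) = c t * c t := by
        norm_num [sg]
      rw [h0, two_smul]
      ring
    have hP : ∑ b ∈ Icc (1 : ℤ) t, sg b • (c (t + b) * c (t - b))
        = ∑ b ∈ Icc (1 : ℤ) t, (-1 : R) ^ b.toNat * c (t + b) * c (t - b) := by
      refine Finset.sum_congr rfl fun b hb => ?_
      rw [mem_Icc] at hb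
      obtain ⟨m, rfl⟩ := Int.eq_ofNat_of_zero_le (by omega : (0 : ℤ) ≤ b)
      rw [Int.toNat_natCast, sg_natCast]
      rcases Nat.even_or_odd m with h | h
      · rw [h.neg_one_pow, (h.neg_one_pow : (-1 : R) ^ m = 1), one_smul, one_mul]
      · rw [h.neg_one_pow, (h.neg_one_pow : (-1 : R) ^ m = -1), neg_one_smul]
        ring
    have hzero : c t * c t + 2 • ∑ b ∈ Icc (1 : ℤ) t, (-1 : R) ^ b.toNat * c (t + b) * c (t - b)
        = 0 := by
      have hr := hrel t htk
      rw [two_smul]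
      linear_combination hr
    rw [h2, hH2, hP, hzero, smul_zero]
  · have h1 : GG c n = -GG c n := by
      conv_lhs => rw [GG, reflect c n sg]
      rw [GG, ← Finset.sum_neg_distrib]
      refine Finset.sum_congr rfl fun a _ => ?_
      rw [sg_sub, show sg n = -1 from by rw [sg, if_neg (Int.not_even_iff_odd.2 hodd)],
        ← neg_smul]
      congr 1
      ring
    have h2 : (2 : ℚ) • GG c n = 0 := by
      rw [two_smul]
      nth_rewrite 1 [h1]
      exact neg_add_cancel _
    exact qsmul_eq_zero two_ne_zero h2

end

-- PART 3a : combinatorial definitions and support lemma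
section
variable {L : ℕ}

lemma prod_split2 {M : Type*} [CommMonoid M] (f : Fin L → M) (j₀ j₁ : Fin L) (h : j₀ ≠ j₁) :
    ∏ j, f j = f j₀ * (f j₁ * ∏ j ∈ (univ.erase j₀).erase j₁, f j) := by
  rw [← Finset.mul_prod_erase univ f (mem_univ j₀),
    ← Finset.mul_prod_erase (univ.erase j₀) f (Finset.mem_erase.2 ⟨h.symm, mem_univ j₁⟩)]

lemma sum_split2 (f : Fin L → ℤ) (j₀ j₁ : Fin L) (h : j₀ ≠ j₁) :
    ∑ j, f j = f j₀ + (f j₁ + ∑ j ∈ (univ.erase j₀).erase j₁, f j) := by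
  rw [← Finset.add_sum_erase univ f (mem_univ j₀),
    ← Finset.add_sum_erase (univ.erase j₀) f (Finset.mem_erase.2 ⟨h.symm, mem_univ j₁⟩)]

variable {D : Finset (Fin L × Fin L)} {p p' : Fin L}

lemma plt (hpp' : (p' : ℕ) = (p : ℕ) + 1) : p < p' := by
  rw [Fin.lt_def, hpp']; omega

lemma pne (hpp' : (p' : ℕ) = (p : ℕ) + 1) : p ≠ p' :=
  Fin.ne_of_lt (plt hpp')

lemma padj (hpp' : (p' : ℕ) = (p : ℕ) + 1) : ∀ j : Fin L, p < j → j = p' ∨ p' < j := by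
  intro j hj
  rw [Fin.lt_def] at hj
  rcases eq_or_lt_of_le (show (p' : ℕ) ≤ (j : ℕ) by omega) with h | h
  · exact Or.inl (Fin.ext h.symm)
  · exact Or.inr (Fin.lt_def.2 h)

lemma Dmem (hD : ValidPairs D) (hin : (p, p') ∈ D) (hpp' : (p' : ℕ) = (p : ℕ) + 1) :
    ∀ h : Fin L, h ≤ p → ((h, p) ∈ D ∧ (h, p') ∈ D) := by
  intro h hh
  have hv := (hD _ hin).2
  exact ⟨hv (h, p) hh hh (le_of_lt (plt hpp')), hv (h, p') (le_trans hh (le_of_lt (plt hpp'))) hh le_rfl⟩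

lemma pairCoef_zero (D : Finset (Fin L × Fin L)) (i j : Fin L) : pairCoef D i j 0 = 1 := by
  simp [pairCoef]

lemma pairCoef_eps {i j : Fin L} (hij : i < j) (hmem : (i, j) ∈ D) (m : ℕ) :
    pairCoef D i j m = eps m := by
  unfold pairCoef eps; rw [if_pos hij, if_pos hmem]

lemma pairCoef_low {i j : Fin L} (hij : ¬ i < j) {m : ℕ} (hm : m ≠ 0) :
    pairCoef D i j m = 0 := by
  unfold pairCoef; rw [if_neg hij, if_neg hm]

variable {R : Type*} [CommRing R] [Algebra ℚ R]

/-- the summand of `T`. -/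
def gf (c : ℤ → R) (D : Finset (Fin L × Fin L)) (lam : Fin L → ℤ) (nn : Fin L → Fin L → ℕ) : R :=
  coefRD D nn • ∏ i, c (rapply nn lam i)

def Nb (lam : Fin L → ℤ) : ℕ := ∑ i : Fin L, i.val * (lam i).toNat

lemma gf_support (c : ℤ → R) (hcneg : ∀ t : ℤ, t < 0 → c t = 0)
    (lam : Fin L → ℤ) (nn : Fin L → Fin L → ℕ) (hg : gf c D lam nn ≠ 0) :
    (∀ i j : Fin L, ¬ i < j → nn i j = 0) ∧ ∀ i j : Fin L, nn i j ≤ Nb lam := by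
  have hco : coefRD D nn ≠ 0 := fun h => hg (by rw [gf, h, zero_smul])
  have htri : ∀ i j : Fin L, ¬ i < j → nn i j = 0 := by
    intro i j hij
    by_contra hm
    exact hco (Finset.prod_eq_zero (mem_univ i)
      (Finset.prod_eq_zero (mem_univ j) (pairCoef_low hij hm)))
  refine ⟨htri, ?_⟩
  have hprod : ∏ i, c (rapply nn lam i) ≠ 0 := fun h => hg (by rw [gf, h, smul_zero])
  have hrap : ∀ i, 0 ≤ rapply nn lam i := by
    intro i
    by_contra h
    push_neg at h
    exact hprod (Finset.prod_eq_zero (mem_univ i) (hcneg _ h))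
  have h1 : ∀ i' j' : Fin L, 0 ≤ ((j'.val : ℤ) - (i'.val : ℤ)) * nn i' j' := by
    intro i' j'
    by_cases h : i' < j'
    · have hlt : (i'.val : ℤ) < (j'.val : ℤ) := by exact_mod_cast (Fin.lt_def.1 h)
      exact mul_nonneg (by omega) (Int.natCast_nonneg _)
    · rw [htri i' j' h]; simp
  have hkey : ∑ i : Fin L, ∑ j : Fin L, ((j.val : ℤ) - (i.val : ℤ)) * nn i j ≤ (Nb lam : ℤ) := by
    have expand : ∀ i : Fin L, (i.val : ℤ) * rapply nn lam i
        = (i.val : ℤ) * lam i + (∑ j : Fin L, (i.val : ℤ) * nn i j) - ∑ h : Fin L, (i.val : ℤ) * nn h i := by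
      intro i
      rw [rapply, ← Finset.mul_sum, ← Finset.mul_sum]
      ring
    have hsum : ∑ i : Fin L, (i.val : ℤ) * rapply nn lam i
        = ∑ i : Fin L, (i.val : ℤ) * lam i + (∑ i, ∑ j : Fin L, (i.val : ℤ) * nn i j)
          - ∑ i, ∑ h : Fin L, (i.val : ℤ) * nn h i := by
      rw [Finset.sum_congr rfl fun i _ => expand i, Finset.sum_sub_distrib,
        Finset.sum_add_distrib]
    have hswap : ∑ i : Fin L, ∑ h : Fin L, (i.val : ℤ) * nn h i
        = ∑ i : Fin L, ∑ j : Fin L, (j.val : ℤ) * nn i j := by rw [Finset.sum_comm]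
    have hdiff : ∑ i : Fin L, ∑ j : Fin L, ((j.val : ℤ) - (i.val : ℤ)) * nn i j
        = ∑ i : Fin L, (i.val : ℤ) * lam i - ∑ i : Fin L, (i.val : ℤ) * rapply nn lam i := by
      have h2 : ∀ i : Fin L, ∑ j, ((j.val : ℤ) - (i.val : ℤ)) * nn i j
          = (∑ j : Fin L, (j.val : ℤ) * nn i j) - ∑ j : Fin L, (i.val : ℤ) * nn i j := by
        intro i
        rw [← Finset.sum_sub_distrib]
        exact Finset.sum_congr rfl fun j _ => by ring
      rw [Finset.sum_congr rfl fun i _ => h2 i, Finset.sum_sub_distrib, hsum, ← hswap]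
      ring
    have hpos : 0 ≤ ∑ i : Fin L, (i.val : ℤ) * rapply nn lam i :=
      Finset.sum_nonneg fun i _ => mul_nonneg (Int.natCast_nonneg _) (hrap i)
    have hlam : ∑ i : Fin L, (i.val : ℤ) * lam i ≤ (Nb lam : ℤ) := by
      rw [Nb]
      push_cast
      refine Finset.sum_le_sum fun i _ => ?_
      exact mul_le_mul_of_nonneg_left (Int.self_le_toNat (lam i)) (Int.natCast_nonneg _)
    linarith [hdiff, hpos, hlam]
  intro i j
  by_cases hij : i < j
  · have hlt : (i.val : ℤ) < (j.val : ℤ) := by exact_mod_cast (Fin.lt_def.1 hij)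
    have h2 : (nn i j : ℤ) ≤ ((j.val : ℤ) - (i.val : ℤ)) * nn i j := by
      nlinarith [Int.natCast_nonneg (nn i j)]
    have h3 : ((j.val : ℤ) - (i.val : ℤ)) * nn i j
        ≤ ∑ j' : Fin L, ((j'.val : ℤ) - (i.val : ℤ)) * nn i j' :=
      Finset.single_le_sum (fun j' _ => h1 i j') (mem_univ j)
    have h4 : ∑ j' : Fin L, ((j'.val : ℤ) - (i.val : ℤ)) * nn i j'
        ≤ ∑ i' : Fin L, ∑ j' : Fin L, ((j'.val : ℤ) - (i'.val : ℤ)) * nn i' j' :=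
      Finset.single_le_sum (fun i' _ => Finset.sum_nonneg fun j' _ => h1 i' j') (mem_univ i)
    have h5 : (nn i j : ℤ) ≤ (Nb lam : ℤ) := by linarith
    exact_mod_cast h5
  · rw [htri i j hij]; exact Nat.zero_le _

end

-- PART 3b : index sets and reparametrisations
section
variable {L : ℕ} {R : Type*} [CommRing R] [Algebra ℚ R]
variable {D : Finset (Fin L × Fin L)} {p p' : Fin L}

def boxF (L N : ℕ) : Finset (Fin L → Fin L → ℕ) :=
  Fintype.piFinset fun _ => Fintype.piFinset fun _ => Finset.range (N + 1)

lemma mem_boxF {N : ℕ} {nn : Fin L → Fin L → ℕ} :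
    nn ∈ boxF L N ↔ ∀ i j : Fin L, nn i j ≤ N := by
  simp [boxF, Fintype.mem_piFinset, Nat.lt_succ_iff]

def TriN (L N : ℕ) : Finset (Fin L → Fin L → ℕ) :=
  (boxF L N).filter fun nn => ∀ i j : Fin L, ¬ i < j → nn i j = 0

lemma mem_TriN {N : ℕ} {nn : Fin L → Fin L → ℕ} :
    nn ∈ TriN L N ↔ (∀ i j : Fin L, nn i j ≤ N) ∧ ∀ i j : Fin L, ¬ i < j → nn i j = 0 := by
  rw [TriN, Finset.mem_filter, mem_boxF]

def PPs (p p' : Fin L) (N : ℕ) : Finset (Fin L → Fin L → ℕ) :=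
  (TriN L N).filter fun ρ => ∀ h : Fin L, ρ h p = 0 ∧ ρ h p' = 0

lemma mem_PPs {N : ℕ} {ρ : Fin L → Fin L → ℕ} :
    ρ ∈ PPs p p' N ↔ ρ ∈ TriN L N ∧ ∀ h : Fin L, ρ h p = 0 ∧ ρ h p' = 0 :=
  Finset.mem_filter

def YYs (p : Fin L) (N : ℕ) : Finset (Fin L → ℕ) :=
  (Fintype.piFinset fun _ : Fin L => Finset.range (N + 1)).filter
    fun x => ∀ h : Fin L, ¬ h < p → x h = 0

lemma mem_YYs {N : ℕ} {x : Fin L → ℕ} :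
    x ∈ YYs p N ↔ (∀ h : Fin L, x h ≤ N) ∧ ∀ h : Fin L, ¬ h < p → x h = 0 := by
  simp [YYs, Finset.mem_filter, Fintype.mem_piFinset, Nat.lt_succ_iff]

def WWs (p : Fin L) (N : ℕ) : Finset (Fin L → ℕ) :=
  (Fintype.piFinset fun _ : Fin L => Finset.range (2 * N + 1)).filter
    fun w => ∀ h : Fin L, ¬ h < p → w h = 0

lemma mem_WWs {N : ℕ} {w : Fin L → ℕ} :
    w ∈ WWs p N ↔ (∀ h : Fin L, w h ≤ 2 * N) ∧ ∀ h : Fin L, ¬ h < p → w h = 0 := by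
  simp [WWs, Finset.mem_filter, Fintype.mem_piFinset, Nat.lt_succ_iff]

def XXs (w : Fin L → ℕ) : Finset (Fin L → ℕ) := Fintype.piFinset fun h => Finset.range (w h + 1)

lemma mem_XXs {w x : Fin L → ℕ} : x ∈ XXs w ↔ ∀ h, x h ≤ w h := by
  simp [XXs, Fintype.mem_piFinset, Nat.lt_succ_iff]

def mk (p p' : Fin L) (ρ : Fin L → Fin L → ℕ) (x y : Fin L → ℕ) (m : ℕ) : Fin L → Fin L → ℕ :=
  fun i j => if i < p ∧ j = p then x i else if i < p ∧ j = p' then y i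
    else if i = p ∧ j = p' then m else ρ i j

def strip (p p' : Fin L) (nn : Fin L → Fin L → ℕ) : Fin L → Fin L → ℕ :=
  fun i j => if j = p ∨ j = p' then 0 else nn i j

def colx (p q : Fin L) (nn : Fin L → Fin L → ℕ) : Fin L → ℕ :=
  fun h => if h < p then nn h q else 0

lemma mk_left_inv (hpp' : (p' : ℕ) = (p : ℕ) + 1) {N : ℕ} {nn : Fin L → Fin L → ℕ}
    (hnn : nn ∈ TriN L N) :
    mk p p' (strip p p' nn) (colx p p nn) (colx p p' nn) (nn p p') = nn := by
  have htri := (mem_TriN.1 hnn).2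
  funext i j
  simp only [mk, strip, colx]
  by_cases h1 : i < p ∧ j = p
  · rcases h1 with ⟨hip, rfl⟩
    rw [if_pos ⟨hip, rfl⟩, if_pos hip]
  · rw [if_neg h1]
    by_cases h2 : i < p ∧ j = p'
    · rcases h2 with ⟨hip, rfl⟩
      rw [if_pos ⟨hip, rfl⟩, if_pos hip]
    · rw [if_neg h2]
      by_cases h3 : i = p ∧ j = p'
      · rcases h3 with ⟨rfl, rfl⟩
        rw [if_pos ⟨rfl, rfl⟩]
      · rw [if_neg h3]
        by_cases h4 : j = p ∨ j = p'
        · rw [if_pos h4]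
          rcases h4 with rfl | rfl
          · exact (htri i j fun hlt => h1 ⟨hlt, rfl⟩).symm
          · have hip : ¬ i < p := fun hlt => h2 ⟨hlt, rfl⟩
            have hne : i ≠ p := fun he => h3 ⟨he, rfl⟩
            have hgt : p < i := lt_of_le_of_ne (not_lt.1 hip) (Ne.symm hne)
            rcases padj hpp' i hgt with rfl | hgt'
            · exact (htri i i (lt_irrefl i)).symm
            · exact (htri i j fun hlt => absurd (lt_trans hgt' hlt) (lt_irrefl _)).symm
        · rw [if_neg h4]

lemma mk_mem_TriN (hpp' : (p' : ℕ) = (p : ℕ) + 1) {N : ℕ} {ρ : Fin L → Fin L → ℕ}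
    {x y : Fin L → ℕ} {m : ℕ} (hρ : ρ ∈ TriN L N) (hx : ∀ h, x h ≤ N) (hy : ∀ h, y h ≤ N)
    (hm : m ≤ N) : mk p p' ρ x y m ∈ TriN L N := by
  obtain ⟨hbd, htri⟩ := mem_TriN.1 hρ
  rw [mem_TriN]
  constructor
  · intro i j
    simp only [mk]
    split_ifs with h1 h2 h3
    · exact hx i
    · exact hy i
    · exact hm
    · exact hbd i j
  · intro i j hij
    simp only [mk]
    rw [if_neg, if_neg, if_neg]
    · exact htri i j hij
    · rintro ⟨rfl, rfl⟩; exact hij (plt hpp')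
    · rintro ⟨hlt, rfl⟩; exact hij (lt_trans hlt (plt hpp'))
    · rintro ⟨hlt, rfl⟩; exact hij hlt

lemma mk_pp' {ρ : Fin L → Fin L → ℕ} {x y : Fin L → ℕ} {m : ℕ}
    (hpp' : (p' : ℕ) = (p : ℕ) + 1) : mk p p' ρ x y m p p' = m := by
  simp [mk]

lemma step2 (c : ℤ → R) (lam : Fin L → ℤ) (N : ℕ) (hpp' : (p' : ℕ) = (p : ℕ) + 1) :
    ∑ nn ∈ TriN L N, gf c D lam nn
      = ∑ ρ ∈ PPs p p' N, ∑ xy ∈ YYs p N ×ˢ YYs p N, ∑ m ∈ Finset.range (N + 1),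
          gf c D lam (mk p p' ρ xy.1 xy.2 m) := by
  have hstep : ∑ nn ∈ TriN L N, gf c D lam nn
      = ∑ q ∈ PPs p p' N ×ˢ ((YYs p N ×ˢ YYs p N) ×ˢ Finset.range (N + 1)),
          gf c D lam (mk p p' q.1 q.2.1.1 q.2.1.2 q.2.2) := by
    refine Finset.sum_nbij'
      (fun nn => (strip p p' nn, ((colx p p nn, colx p p' nn), nn p p')))
      (fun q => mk p p' q.1 q.2.1.1 q.2.1.2 q.2.2) ?_ ?_ ?_ ?_ ?_
    · intro nn hnn
      obtain ⟨hbd, htri⟩ := mem_TriN.1 hnn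
      simp only [Finset.mem_product, mem_PPs, mem_TriN, mem_YYs, Finset.mem_range]
      refine ⟨⟨⟨fun i j => ?_, fun i j hij => ?_⟩, fun h => ⟨?_, ?_⟩⟩,
        ⟨⟨fun h => ?_, fun h hh => ?_⟩, ⟨fun h => ?_, fun h hh => ?_⟩⟩, Nat.lt_succ_of_le (hbd p p')⟩
      · simp only [strip]; split_ifs; exacts [Nat.zero_le _, hbd i j]
      · simp only [strip]; split_ifs with h; exacts [rfl, htri i j hij]
      · simp [strip]
      · simp [strip]
      · simp only [colx]; split_ifs; exacts [hbd h p, Nat.zero_le _]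
      · simp only [colx]; rw [if_neg hh]
      · simp only [colx]; split_ifs; exacts [hbd h p', Nat.zero_le _]
      · simp only [colx]; rw [if_neg hh]
    · intro q hq
      simp only [Finset.mem_product, mem_PPs, mem_YYs, Finset.mem_range] at hq
      exact mk_mem_TriN hpp' hq.1.1 hq.2.1.1.1 hq.2.1.2.1 (Nat.lt_succ_iff.1 hq.2.2)
    · intro nn hnn
      exact mk_left_inv hpp' hnn
    · intro q hq
      simp only [Finset.mem_product, mem_PPs, mem_TriN, mem_YYs, Finset.mem_range] at hq
      obtain ⟨⟨⟨hbd, htri⟩, hcols⟩, ⟨⟨hxb, hxs⟩, ⟨hyb, hys⟩⟩, hm⟩ := hq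
      have e1 : strip p p' (mk p p' q.1 q.2.1.1 q.2.1.2 q.2.2) = q.1 := by
        funext i j
        simp only [strip, mk]
        by_cases h4 : j = p ∨ j = p'
        · rw [if_pos h4]
          rcases h4 with rfl | rfl
          · exact ((hcols i).1).symm
          · exact ((hcols i).2).symm
        · rw [if_neg h4, if_neg, if_neg, if_neg]
          · rintro ⟨_, rfl⟩; exact h4 (Or.inr rfl)
          · rintro ⟨_, rfl⟩; exact h4 (Or.inr rfl)
          · rintro ⟨_, rfl⟩; exact h4 (Or.inl rfl)
      have e2 : colx p p (mk p p' q.1 q.2.1.1 q.2.1.2 q.2.2) = q.2.1.1 := by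
        funext h
        by_cases hh : h < p
        · simp [colx, mk, hh]
        · simp only [colx]; rw [if_neg hh, (hxs h hh).symm]
      have e3 : colx p p' (mk p p' q.1 q.2.1.1 q.2.1.2 q.2.2) = q.2.1.2 := by
        funext h
        by_cases hh : h < p
        · simp [colx, mk, hh, (pne hpp').symm]
        · simp only [colx]; rw [if_neg hh, (hys h hh).symm]
      exact Prod.ext e1 (Prod.ext (Prod.ext e2 e3) (mk_pp' hpp'))
    · intro nn hnn
      rw [mk_left_inv hpp' hnn]
  rw [hstep, Finset.sum_product]
  refine Finset.sum_congr rfl fun ρ _ => ?_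
  rw [Finset.sum_product]

lemma step3 (c : ℤ → R) (hcneg : ∀ t : ℤ, t < 0 → c t = 0) (lam : Fin L → ℤ)
    (N : ℕ) (hN : Nb lam ≤ N) (hpp' : (p' : ℕ) = (p : ℕ) + 1) (ρ : Fin L → Fin L → ℕ) :
    ∑ xy ∈ YYs p N ×ˢ YYs p N, ∑ m ∈ Finset.range (N + 1),
        gf c D lam (mk p p' ρ xy.1 xy.2 m)
      = ∑ wx ∈ (WWs p N).sigma (fun w => XXs w), ∑ m ∈ Finset.range (N + 1),
          gf c D lam (mk p p' ρ wx.2 (wx.1 - wx.2) m) := by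
  refine Finset.sum_of_injOn (fun xy => ⟨xy.1 + xy.2, xy.1⟩) ?_ ?_ ?_ ?_
  · intro a ha b hb hab
    have h1 : a.1 + a.2 = b.1 + b.2 := congrArg Sigma.fst hab
    have h2 : a.1 = b.1 := by
      have := congrArg Sigma.snd hab
      exact this
    refine Prod.ext h2 (funext fun h => ?_)
    have := congrFun h1 h
    simp only [Pi.add_apply] at this
    have h3 := congrFun h2 h
    omega
  · intro xy hxy
    simp only [Finset.coe_product, Set.mem_prod, Finset.mem_coe, mem_YYs] at hxy
    simp only [Finset.mem_coe, Finset.mem_sigma, mem_WWs, mem_XXs]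
    refine ⟨⟨fun h => ?_, fun h hh => ?_⟩, fun h => ?_⟩
    · have := hxy.1.1 h; have := hxy.2.1 h; simp only [Pi.add_apply]; omega
    · simp only [Pi.add_apply]; rw [hxy.1.2 h hh, hxy.2.2 h hh]
    · simp only [Pi.add_apply]; omega
  · intro wx hwx himg
    simp only [Finset.mem_sigma, mem_WWs, mem_XXs] at hwx
    obtain ⟨⟨hwb, hws⟩, hxw⟩ := hwx
    refine Finset.sum_eq_zero fun m _ => ?_
    by_contra hg
    obtain ⟨-, hbd⟩ := gf_support c hcneg lam _ hg
    apply himg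
    have hxmem : wx.2 ∈ YYs p N := by
      rw [mem_YYs]
      refine ⟨fun h => ?_, fun h hh => by have := hxw h; have := hws h hh; omega⟩
      by_cases hh : h < p
      · have h6 : mk p p' ρ wx.2 (wx.1 - wx.2) m h p = wx.2 h := by simp [mk, hh]
        have h5 := hbd h p
        rw [h6] at h5
        exact h5.trans hN
      · have := hxw h; have := hws h hh; omega
    have hymem : wx.1 - wx.2 ∈ YYs p N := by
      rw [mem_YYs]
      refine ⟨fun h => ?_, fun h hh => by
        have := hws h hh; simp only [Pi.sub_apply]; omega⟩
      by_cases hh : h < p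
      · have h6 : mk p p' ρ wx.2 (wx.1 - wx.2) m h p' = (wx.1 - wx.2) h := by
          simp [mk, hh, (pne hpp').symm]
        have h5 := hbd h p'
        rw [h6] at h5
        exact h5.trans hN
      · have := hws h hh; simp only [Pi.sub_apply]; omega
    refine ⟨(wx.2, wx.1 - wx.2), ?_, ?_⟩
    · simp only [Finset.coe_product, Set.mem_prod, Finset.mem_coe]
      exact ⟨hxmem, hymem⟩
    · have : wx.2 + (wx.1 - wx.2) = wx.1 := by
        funext h
        have := hxw h
        simp only [Pi.add_apply, Pi.sub_apply]
        omega
      calc (⟨wx.2 + (wx.1 - wx.2), wx.2⟩ : Σ _ : Fin L → ℕ, Fin L → ℕ)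
          = ⟨wx.1, wx.2⟩ := by rw [this]
        _ = wx := by rfl
  · intro xy hxy
    have h1 : xy.1 + xy.2 - xy.1 = xy.2 := by
      funext h; simp only [Pi.add_apply, Pi.sub_apply]; omega
    rw [h1]

end

-- PART 3c : evaluation of gf on mk
section
variable {L : ℕ} {R : Type*} [CommRing R] [Algebra ℚ R]
variable {D : Finset (Fin L × Fin L)} {p p' : Fin L}

def EEf (w x : Fin L → ℕ) : ℚ := ∏ h, (eps (x h) * eps (w h - x h))

def bases (lam : Fin L → ℤ) (ρ : Fin L → Fin L → ℕ) (w : Fin L → ℕ) (i : Fin L) : ℤ :=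
  lam i + (w i : ℤ) + ∑ j : Fin L, (ρ i j : ℤ) - ∑ h : Fin L, (ρ h i : ℤ)

def QQr (c : ℤ → R) (p p' : Fin L) (lam : Fin L → ℤ) (ρ : Fin L → Fin L → ℕ)
    (w : Fin L → ℕ) : R :=
  ∏ i ∈ (univ.erase p).erase p', c (bases lam ρ w i)

section mkeval
variable {ρ : Fin L → Fin L → ℕ} {x y : Fin L → ℕ} {m : ℕ}

lemma mk_row_p : ∀ j, mk p p' ρ x y m p j = if j = p' then m else ρ p j := by
  intro j; simp [mk]

lemma mk_col_p (hpp' : (p' : ℕ) = (p : ℕ) + 1)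
    (hρcol : ∀ h : Fin L, ρ h p = 0 ∧ ρ h p' = 0)
    (hxs : ∀ h : Fin L, ¬ h < p → x h = 0) :
    ∀ h, mk p p' ρ x y m h p = x h := by
  intro h
  by_cases hh : h < p
  · simp [mk, hh]
  · simp only [mk]
    rw [if_neg (fun hc => hh hc.1), if_neg (fun hc => hh hc.1),
      if_neg (fun hc => (pne hpp') hc.2), (hρcol h).1, hxs h hh]

lemma mk_row_p' (hpp' : (p' : ℕ) = (p : ℕ) + 1) :
    ∀ j, mk p p' ρ x y m p' j = ρ p' j := by
  intro j
  simp only [mk]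
  rw [if_neg (fun hc => absurd hc.1 (lt_asymm (plt hpp'))),
    if_neg (fun hc => absurd hc.1 (lt_asymm (plt hpp'))),
    if_neg (fun hc => (pne hpp') hc.1.symm)]

lemma mk_col_p' (hpp' : (p' : ℕ) = (p : ℕ) + 1)
    (hρcol : ∀ h : Fin L, ρ h p = 0 ∧ ρ h p' = 0)
    (hys : ∀ h : Fin L, ¬ h < p → y h = 0) :
    ∀ h, mk p p' ρ x y m h p' = if h = p then m else y h := by
  intro h
  by_cases hh : h < p
  · simp [mk, hh, (Ne.symm (pne hpp') : p' ≠ p), (Fin.ne_of_lt hh : h ≠ p)]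
  · by_cases hp : h = p
    · subst hp
      rw [mk_pp' hpp', if_pos rfl]
    · simp only [mk]
      rw [if_neg (fun hc => hh hc.1), if_neg (fun hc => hh hc.1),
        if_neg (fun hc => hp hc.1), (hρcol h).2, if_neg hp, hys h hh]

lemma mk_other {i : Fin L} (hip : ¬ i < p) (hne : i ≠ p) :
    ∀ j, mk p p' ρ x y m i j = ρ i j := by
  intro j
  simp only [mk]
  rw [if_neg (fun hc => hip hc.1), if_neg (fun hc => hip hc.1), if_neg (fun hc => hne hc.1)]

lemma mk_row_lt {i : Fin L} (hip : i < p) :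
    ∀ j, mk p p' ρ x y m i j = if j = p then x i else if j = p' then y i else ρ i j := by
  intro j
  simp only [mk]
  by_cases h1 : j = p
  · rw [if_pos ⟨hip, h1⟩, if_pos h1]
  · rw [if_neg (fun hc => h1 hc.2), if_neg h1]
    by_cases h2 : j = p'
    · rw [if_pos ⟨hip, h2⟩, if_pos h2]
    · rw [if_neg (fun hc => h2 hc.2), if_neg (fun hc => h2 hc.2), if_neg h2]

lemma rapply_mk_p (hpp' : (p' : ℕ) = (p : ℕ) + 1)
    (hρcol : ∀ h : Fin L, ρ h p = 0 ∧ ρ h p' = 0)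
    (hxs : ∀ h : Fin L, ¬ h < p → x h = 0) (lam : Fin L → ℤ) :
    rapply (mk p p' ρ x y m) lam p
      = (lam p + ∑ j : Fin L, (ρ p j : ℤ)) + m - ∑ h : Fin L, (x h : ℤ) := by
  have hrow : ∑ j : Fin L, (mk p p' ρ x y m p j : ℤ) = (m : ℤ) + ∑ j : Fin L, (ρ p j : ℤ) := by
    have h1 : ∑ j : Fin L, (mk p p' ρ x y m p j : ℤ)
        = (m : ℤ) + ∑ j ∈ univ.erase p', (ρ p j : ℤ) := by
      rw [← Finset.add_sum_erase univ _ (mem_univ p')]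
      congr 1
      · rw [mk_row_p, if_pos rfl]
      · refine Finset.sum_congr rfl fun j hj => ?_
        rw [mk_row_p, if_neg (Finset.mem_erase.1 hj).1]
    have h2 : ∑ j : Fin L, (ρ p j : ℤ) = ∑ j ∈ univ.erase p', (ρ p j : ℤ) := by
      rw [← Finset.add_sum_erase univ _ (mem_univ p'), (hρcol p).2]
      norm_num
    rw [h1, ← h2]
  have hcol : ∑ h : Fin L, (mk p p' ρ x y m h p : ℤ) = ∑ h : Fin L, (x h : ℤ) := by
    refine Finset.sum_congr rfl fun h _ => ?_
    rw [mk_col_p hpp' hρcol hxs]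
  simp only [rapply]
  rw [hrow, hcol]
  ring

lemma rapply_mk_p' (hpp' : (p' : ℕ) = (p : ℕ) + 1)
    (hρcol : ∀ h : Fin L, ρ h p = 0 ∧ ρ h p' = 0)
    (hys : ∀ h : Fin L, ¬ h < p → y h = 0) (lam : Fin L → ℤ) :
    rapply (mk p p' ρ x y m) lam p'
      = (lam p' + ∑ j : Fin L, (ρ p' j : ℤ)) - m - ∑ h : Fin L, (y h : ℤ) := by
  have hrow : ∑ j : Fin L, (mk p p' ρ x y m p' j : ℤ) = ∑ j : Fin L, (ρ p' j : ℤ) := by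
    refine Finset.sum_congr rfl fun j _ => ?_
    rw [mk_row_p' hpp']
  have hcol : ∑ h : Fin L, (mk p p' ρ x y m h p' : ℤ)
      = (m : ℤ) + ∑ h : Fin L, (y h : ℤ) := by
    have h1 : ∑ h : Fin L, (mk p p' ρ x y m h p' : ℤ)
        = (m : ℤ) + ∑ h ∈ univ.erase p, (y h : ℤ) := by
      rw [← Finset.add_sum_erase univ _ (mem_univ p)]
      congr 1
      · rw [mk_col_p' hpp' hρcol hys, if_pos rfl]
      · refine Finset.sum_congr rfl fun h hh => ?_
        rw [mk_col_p' hpp' hρcol hys, if_neg (Finset.mem_erase.1 hh).1]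
    have h2 : ∑ h : Fin L, (y h : ℤ) = ∑ h ∈ univ.erase p, (y h : ℤ) := by
      rw [← Finset.add_sum_erase univ _ (mem_univ p), hys p (lt_irrefl p)]
      norm_num
    rw [h1, ← h2]
  simp only [rapply]
  rw [hrow, hcol]
  ring

lemma rapply_mk_other (hpp' : (p' : ℕ) = (p : ℕ) + 1)
    (hρcol : ∀ h : Fin L, ρ h p = 0 ∧ ρ h p' = 0)
    (hxs : ∀ h : Fin L, ¬ h < p → x h = 0) (hys : ∀ h : Fin L, ¬ h < p → y h = 0)
    (lam : Fin L → ℤ) {i : Fin L} (hne : i ≠ p) (hne' : i ≠ p') :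
    rapply (mk p p' ρ x y m) lam i
      = lam i + ((x i : ℤ) + (y i : ℤ)) + ∑ j : Fin L, (ρ i j : ℤ)
        - ∑ h : Fin L, (ρ h i : ℤ) := by
  have hcol : ∑ h : Fin L, (mk p p' ρ x y m h i : ℤ) = ∑ h : Fin L, (ρ h i : ℤ) := by
    refine Finset.sum_congr rfl fun h _ => ?_
    simp only [mk]
    rw [if_neg (fun hc => hne hc.2), if_neg (fun hc => hne' hc.2), if_neg (fun hc => hne' hc.2)]
  by_cases hip : i < p
  · have hrow : ∑ j : Fin L, (mk p p' ρ x y m i j : ℤ)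
        = ((x i : ℤ) + (y i : ℤ)) + ∑ j : Fin L, (ρ i j : ℤ) := by
      have h1 : ∑ j : Fin L, (mk p p' ρ x y m i j : ℤ)
          = (x i : ℤ) + ((y i : ℤ) + ∑ j ∈ (univ.erase p).erase p', (ρ i j : ℤ)) := by
        rw [sum_split2 _ p p' (pne hpp')]
        congr 1
        · rw [mk_row_lt hip, if_pos rfl]
        congr 1
        · rw [mk_row_lt hip, if_neg (Ne.symm (pne hpp')), if_pos rfl]
        · refine Finset.sum_congr rfl fun j hj => ?_
          obtain ⟨hjp', hjmem⟩ := Finset.mem_erase.1 hj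
          obtain ⟨hjp, -⟩ := Finset.mem_erase.1 hjmem
          rw [mk_row_lt hip, if_neg hjp, if_neg hjp']
      have h2 : ∑ j : Fin L, (ρ i j : ℤ)
          = ∑ j ∈ (univ.erase p).erase p', (ρ i j : ℤ) := by
        rw [sum_split2 _ p p' (pne hpp'), (hρcol i).1, (hρcol i).2]
        norm_num
      rw [h1, ← h2]
      ring
    simp only [rapply]
    rw [hrow, hcol]
    ring
  · have hrow : ∑ j : Fin L, (mk p p' ρ x y m i j : ℤ) = ∑ j : Fin L, (ρ i j : ℤ) := by
      refine Finset.sum_congr rfl fun j _ => ?_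
      rw [mk_other hip hne]
    simp only [rapply]
    rw [hrow, hcol, hxs i hip, hys i hip]
    push_cast
    ring

lemma coefRD_mk (hD : ValidPairs D) (hin : (p, p') ∈ D) (hpp' : (p' : ℕ) = (p : ℕ) + 1)
    (hρcol : ∀ h : Fin L, ρ h p = 0 ∧ ρ h p' = 0)
    (hxs : ∀ h : Fin L, ¬ h < p → x h = 0) (hys : ∀ h : Fin L, ¬ h < p → y h = 0) :
    coefRD D (mk p p' ρ x y m)
      = (∏ h, (eps (x h) * eps (y h))) * (eps m * coefRD D ρ) := by
  have hrow : ∀ i : Fin L, ∏ j, pairCoef D i j (mk p p' ρ x y m i j)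
      = (if i = p then eps m else eps (x i) * eps (y i)) * ∏ j, pairCoef D i j (ρ i j) := by
    intro i
    by_cases hi : i = p
    · rw [if_pos hi, hi]
      have h1 : ∏ j, pairCoef D p j (mk p p' ρ x y m p j)
          = eps m * ∏ j ∈ univ.erase p', pairCoef D p j (ρ p j) := by
        rw [← Finset.mul_prod_erase univ _ (mem_univ p')]
        congr 1
        · rw [mk_row_p, if_pos rfl, pairCoef_eps (plt hpp') hin]
        · refine Finset.prod_congr rfl fun j hj => ?_
          rw [mk_row_p, if_neg (Finset.mem_erase.1 hj).1]
      have h2 : ∏ j, pairCoef D p j (ρ p j) = ∏ j ∈ univ.erase p', pairCoef D p j (ρ p j) := by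
        rw [← Finset.mul_prod_erase univ _ (mem_univ p'), (hρcol p).2, pairCoef_zero, one_mul]
      rw [h1, ← h2]
    · rw [if_neg hi]
      by_cases hip : i < p
      · have hDi := Dmem hD hin hpp' i (le_of_lt hip)
        have h1 : ∏ j, pairCoef D i j (mk p p' ρ x y m i j)
            = eps (x i) * (eps (y i)
              * ∏ j ∈ (univ.erase p).erase p', pairCoef D i j (ρ i j)) := by
          rw [prod_split2 _ p p' (pne hpp')]
          congr 1
          · rw [mk_row_lt hip, if_pos rfl, pairCoef_eps hip hDi.1]
          congr 1
          · rw [mk_row_lt hip, if_neg (Ne.symm (pne hpp')), if_pos rfl,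
              pairCoef_eps (lt_trans hip (plt hpp')) hDi.2]
          · refine Finset.prod_congr rfl fun j hj => ?_
            obtain ⟨hjp', hjmem⟩ := Finset.mem_erase.1 hj
            obtain ⟨hjp, -⟩ := Finset.mem_erase.1 hjmem
            rw [mk_row_lt hip, if_neg hjp, if_neg hjp']
        have h2 : ∏ j, pairCoef D i j (ρ i j)
            = ∏ j ∈ (univ.erase p).erase p', pairCoef D i j (ρ i j) := by
          rw [prod_split2 _ p p' (pne hpp'), (hρcol i).1, (hρcol i).2, pairCoef_zero,
            pairCoef_zero, one_mul, one_mul]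
        rw [h1, ← h2]
        ring
      · have h1 : ∏ j, pairCoef D i j (mk p p' ρ x y m i j)
            = ∏ j, pairCoef D i j (ρ i j) := by
          refine Finset.prod_congr rfl fun j _ => ?_
          rw [mk_other hip hi]
        rw [h1, hxs i hip, hys i hip, eps_zero]
        ring
  rw [coefRD, Finset.prod_congr rfl fun i _ => hrow i, Finset.prod_mul_distrib]
  have h3 : ∏ i : Fin L, (if i = p then eps m else eps (x i) * eps (y i))
      = eps m * ∏ i : Fin L, (eps (x i) * eps (y i)) := by
    rw [← Finset.mul_prod_erase univ _ (mem_univ p), if_pos rfl]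
    have h4 : ∏ i : Fin L, (eps (x i) * eps (y i))
        = ∏ i ∈ univ.erase p, (eps (x i) * eps (y i)) := by
      rw [← Finset.mul_prod_erase univ (fun i => eps (x i) * eps (y i)) (mem_univ p),
        hxs p (lt_irrefl p), hys p (lt_irrefl p), eps_zero, one_mul, one_mul]
    rw [h4]
    congr 1
    refine Finset.prod_congr rfl fun i hi => ?_
    rw [if_neg (Finset.mem_erase.1 hi).1]
  rw [h3, coefRD]
  ring

end mkeval

lemma B1 (c : ℤ → R) (lam : Fin L → ℤ) {N : ℕ} {ρ : Fin L → Fin L → ℕ} {w x : Fin L → ℕ}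
    (hD : ValidPairs D) (hin : (p, p') ∈ D) (hpp' : (p' : ℕ) = (p : ℕ) + 1)
    (hρ : ρ ∈ PPs p p' N) (hw : w ∈ WWs p N) (hx : x ∈ XXs w) (m : ℕ) :
    gf c D lam (mk p p' ρ x (w - x) m)
      = (EEf w x * (eps m * coefRD D ρ)) •
        (c ((lam p + ∑ j : Fin L, (ρ p j : ℤ) - ∑ h : Fin L, (x h : ℤ)) + m)
          * c ((lam p' + ∑ j : Fin L, (ρ p' j : ℤ) - ∑ h : Fin L, ((w - x) h : ℤ)) - m)
          * QQr c p p' lam ρ w) := by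
  have hρcol := (mem_PPs.1 hρ).2
  have hws := (mem_WWs.1 hw).2
  have hxw := mem_XXs.1 hx
  have hxs : ∀ h : Fin L, ¬ h < p → x h = 0 := fun h hh => by
    have := hxw h; have := hws h hh; omega
  have hys : ∀ h : Fin L, ¬ h < p → (w - x) h = 0 := fun h hh => by
    have := hws h hh; simp only [Pi.sub_apply]; omega
  have hco := coefRD_mk (x := x) (y := w - x) (m := m) hD hin hpp' hρcol hxs hys
  have hEE : ∏ h, (eps (x h) * eps ((w - x) h)) = EEf w x := by
    rw [EEf]
    exact Finset.prod_congr rfl fun h _ => by rw [Pi.sub_apply]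
  have hprod : ∏ i, c (rapply (mk p p' ρ x (w - x) m) lam i)
      = c ((lam p + ∑ j : Fin L, (ρ p j : ℤ) - ∑ h : Fin L, (x h : ℤ)) + m)
        * c ((lam p' + ∑ j : Fin L, (ρ p' j : ℤ) - ∑ h : Fin L, ((w - x) h : ℤ)) - m)
        * QQr c p p' lam ρ w := by
    rw [prod_split2 _ p p' (pne hpp')]
    have e1 : rapply (mk p p' ρ x (w - x) m) lam p
        = (lam p + ∑ j : Fin L, (ρ p j : ℤ) - ∑ h : Fin L, (x h : ℤ)) + m := by
      rw [rapply_mk_p hpp' hρcol hxs]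
      ring
    have e2 : rapply (mk p p' ρ x (w - x) m) lam p'
        = (lam p' + ∑ j : Fin L, (ρ p' j : ℤ) - ∑ h : Fin L, ((w - x) h : ℤ)) - m := by
      rw [rapply_mk_p' hpp' hρcol hys]
      ring
    rw [e1, e2, mul_assoc]
    congr 1
    congr 1
    rw [QQr]
    refine Finset.prod_congr rfl fun i hi => ?_
    obtain ⟨hip', himem⟩ := Finset.mem_erase.1 hi
    obtain ⟨hip, -⟩ := Finset.mem_erase.1 himem
    rw [rapply_mk_other hpp' hρcol hxs hys lam hip hip', bases]
    congr 2
    have := hxw i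
    simp only [Pi.sub_apply]
    omega
  rw [gf, hco, hprod, hEE]

end

-- PART 3d : swap lemmas, B2, key block cancellation
section
variable {L : ℕ} {R : Type*} [CommRing R] [Algebra ℚ R]
variable {D : Finset (Fin L × Fin L)} {p p' : Fin L}

def swr (p p' : Fin L) (ρ : Fin L → Fin L → ℕ) : Fin L → Fin L → ℕ :=
  fun i j => ρ (Equiv.swap p p' i) j

lemma swr_row_p (ρ : Fin L → Fin L → ℕ) : ∀ j, swr p p' ρ p j = ρ p' j := by
  intro j; rw [swr]; rw [Equiv.swap_apply_left]

lemma swr_row_p' (ρ : Fin L → Fin L → ℕ) : ∀ j, swr p p' ρ p' j = ρ p j := by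
  intro j; rw [swr]; rw [Equiv.swap_apply_right]

lemma swr_invol (ρ : Fin L → Fin L → ℕ) : swr p p' (swr p p' ρ) = ρ := by
  funext i j; rw [swr, swr, Equiv.swap_apply_self]

lemma swr_colsum (ρ : Fin L → Fin L → ℕ) (i : Fin L) :
    ∑ h : Fin L, (swr p p' ρ h i : ℤ) = ∑ h : Fin L, (ρ h i : ℤ) :=
  Equiv.sum_comp (Equiv.swap p p') (fun h => (ρ h i : ℤ))

lemma swr_mem (hpp' : (p' : ℕ) = (p : ℕ) + 1) {N : ℕ} {ρ : Fin L → Fin L → ℕ}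
    (hρ : ρ ∈ PPs p p' N) : swr p p' ρ ∈ PPs p p' N := by
  obtain ⟨htri', hcols⟩ := mem_PPs.1 hρ
  obtain ⟨hbd, htri⟩ := mem_TriN.1 htri'
  rw [mem_PPs, mem_TriN]
  refine ⟨⟨fun i j => hbd _ _, fun i j hij => ?_⟩,
    fun h => ⟨(hcols _).1, (hcols _).2⟩⟩
  show ρ (Equiv.swap p p' i) j = 0
  by_cases hi : i = p
  · rw [hi, Equiv.swap_apply_left]
    refine htri p' j fun hlt => hij ?_
    rw [hi]
    exact lt_trans (plt hpp') hlt
  · by_cases hi' : i = p'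
    · rw [hi', Equiv.swap_apply_right]
      by_cases hpj : p < j
      · rcases padj hpp' j hpj with rfl | hlt
        · exact (hcols p).2
        · exact absurd (hi' ▸ hlt : i < j) hij
      · exact htri p j hpj
    · rw [Equiv.swap_apply_of_ne_of_ne hi hi']
      exact htri i j hij

lemma coefRD_swr (hrows : ∀ h : Fin L, p' < h → ((p, h) ∈ D ↔ (p', h) ∈ D))
    (hpp' : (p' : ℕ) = (p : ℕ) + 1) {N : ℕ} {ρ : Fin L → Fin L → ℕ}
    (hρ : ρ ∈ PPs p p' N) : coefRD D (swr p p' ρ) = coefRD D ρ := by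
  obtain ⟨htri', hcols⟩ := mem_PPs.1 hρ
  obtain ⟨-, htri⟩ := mem_TriN.1 htri'
  have hpt : ∀ i j : Fin L, pairCoef D i j (ρ (Equiv.swap p p' i) j)
      = pairCoef D (Equiv.swap p p' i) j (ρ (Equiv.swap p p' i) j) := by
    intro i j
    by_cases hi : i = p
    · rw [hi, Equiv.swap_apply_left]
      by_cases hz : ρ p' j = 0
      · rw [hz, pairCoef_zero, pairCoef_zero]
      · have hlt : p' < j := by by_contra h; exact hz (htri p' j h)
        have hplt' : p < j := lt_trans (plt hpp') hlt
        unfold pairCoef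
        rw [if_pos hplt', if_pos hlt]
        by_cases hd : (p', j) ∈ D
        · rw [if_pos ((hrows j hlt).2 hd), if_pos hd]
        · rw [if_neg (fun hmem => hd ((hrows j hlt).1 hmem)), if_neg hd]
    · by_cases hi' : i = p'
      · rw [hi', Equiv.swap_apply_right]
        by_cases hz : ρ p j = 0
        · rw [hz, pairCoef_zero, pairCoef_zero]
        · have hpj : p < j := by by_contra h; exact hz (htri p j h)
          have hlt : p' < j := by
            rcases padj hpp' j hpj with rfl | h
            · exact absurd (hcols p).2 hz
            · exact h
          unfold pairCoef
          rw [if_pos hpj, if_pos hlt]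
          by_cases hd : (p, j) ∈ D
          · rw [if_pos ((hrows j hlt).1 hd), if_pos hd]
          · rw [if_neg (fun hmem => hd ((hrows j hlt).2 hmem)), if_neg hd]
      · rw [Equiv.swap_apply_of_ne_of_ne hi hi']
  calc coefRD D (swr p p' ρ)
      = ∏ i : Fin L, ∏ j : Fin L,
          pairCoef D (Equiv.swap p p' i) j (ρ (Equiv.swap p p' i) j) := by
        rw [coefRD]
        exact Finset.prod_congr rfl fun i _ => Finset.prod_congr rfl fun j _ => hpt i j
    _ = ∏ i : Fin L, ∏ j : Fin L, pairCoef D i j (ρ i j) :=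
        Equiv.prod_comp (Equiv.swap p p') (fun i => ∏ j, pairCoef D i j (ρ i j))
    _ = coefRD D ρ := rfl

lemma QQr_swr (c : ℤ → R) (lam₁ lam₂ : Fin L → ℤ)
    (hoff : ∀ i : Fin L, i ≠ p → i ≠ p' → lam₂ i = lam₁ i)
    (ρ : Fin L → Fin L → ℕ) (w : Fin L → ℕ) :
    QQr c p p' lam₂ (swr p p' ρ) w = QQr c p p' lam₁ ρ w := by
  rw [QQr, QQr]
  refine Finset.prod_congr rfl fun i hi => ?_
  obtain ⟨hip', himem⟩ := Finset.mem_erase.1 hi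
  obtain ⟨hip, -⟩ := Finset.mem_erase.1 himem
  have hr : ∑ j : Fin L, (swr p p' ρ i j : ℤ) = ∑ j : Fin L, (ρ i j : ℤ) :=
    Finset.sum_congr rfl fun j _ => by
      rw [swr, Equiv.swap_apply_of_ne_of_ne hip hip']
  rw [bases, bases, hoff i hip hip', swr_colsum, hr]

lemma B2 (c : ℤ → R) (hcneg : ∀ t : ℤ, t < 0 → c t = 0) (lam : Fin L → ℤ)
    {N : ℕ} {ρ : Fin L → Fin L → ℕ} {w x : Fin L → ℕ}
    (hD : ValidPairs D) (hin : (p, p') ∈ D) (hpp' : (p' : ℕ) = (p : ℕ) + 1)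
    (hρ : ρ ∈ PPs p p' N) (hw : w ∈ WWs p N) (hx : x ∈ XXs w) (hN : Nb lam ≤ N) :
    ∑ m ∈ Finset.range (N + 1), gf c D lam (mk p p' ρ x (w - x) m)
      = (EEf w x * coefRD D ρ) •
        (FF c (lam p + ∑ j : Fin L, (ρ p j : ℤ) - ∑ h : Fin L, (x h : ℤ))
            (lam p' + ∑ j : Fin L, (ρ p' j : ℤ) - ∑ h : Fin L, ((w - x) h : ℤ))
          * QQr c p p' lam ρ w) := by
  have hB1 : ∀ m : ℕ, gf c D lam (mk p p' ρ x (w - x) m)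
      = (EEf w x * coefRD D ρ) •
        (eps m • (c ((lam p + ∑ j : Fin L, (ρ p j : ℤ) - ∑ h : Fin L, (x h : ℤ)) + m)
          * c ((lam p' + ∑ j : Fin L, (ρ p' j : ℤ) - ∑ h : Fin L, ((w - x) h : ℤ)) - m)
          * QQr c p p' lam ρ w)) := by
    intro m
    rw [B1 c lam hD hin hpp' hρ hw hx m, smul_smul]
    congr 1
    ring
  rw [Finset.sum_congr rfl fun m _ => hB1 m, ← Finset.smul_sum]
  by_cases hEC : EEf w x * coefRD D ρ = 0
  · rw [hEC, zero_smul, zero_smul]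
  · congr 1
    set v := lam p' + ∑ j : Fin L, (ρ p' j : ℤ) - ∑ h : Fin L, ((w - x) h : ℤ) with hv
    set M' := N + 1 + (v.toNat + 1) with hM'
    have hsub : ∑ m ∈ Finset.range (N + 1),
          eps m • (c ((lam p + ∑ j : Fin L, (ρ p j : ℤ) - ∑ h : Fin L, (x h : ℤ)) + m)
            * c (v - m) * QQr c p p' lam ρ w)
        = ∑ m ∈ Finset.range M',
          eps m • (c ((lam p + ∑ j : Fin L, (ρ p j : ℤ) - ∑ h : Fin L, (x h : ℤ)) + m)
            * c (v - m) * QQr c p p' lam ρ w) := by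
      refine Finset.sum_subset (Finset.range_subset_range.2 (by omega)) ?_
      intro m hm hnot
      rw [Finset.mem_range] at hm hnot
      have hg : gf c D lam (mk p p' ρ x (w - x) m) = 0 := by
        by_contra hg
        have hb := (gf_support c hcneg lam _ hg).2 p p'
        rw [mk_pp' hpp'] at hb
        omega
      rw [hB1 m] at hg
      exact qsmul_eq_zero hEC hg
    rw [hsub, FFQ c hcneg _ v (QQr c p p' lam ρ w) M' (by
      have := Int.self_le_toNat v
      push_cast [hM']
      omega)]

lemma keyblock (c : ℤ → R) (k : ℕ) (hcneg : ∀ t : ℤ, t < 0 → c t = 0)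
    (hrel : ∀ r : ℤ, (k : ℤ) < r →
      c r ^ 2 + 2 * ∑ i ∈ Icc (1 : ℤ) r, (-1) ^ i.toNat * c (r + i) * c (r - i) = 0)
    (A B : ℤ) (QD : R) (C : ℚ) (w : Fin L → ℕ)
    (h2k : 2 * (k : ℤ) < A + B) :
    (∑ x ∈ XXs w, (EEf w x * C) •
        (FF c (A - ∑ h : Fin L, (x h : ℤ))
          (B - (∑ h : Fin L, (w h : ℤ) - ∑ h : Fin L, (x h : ℤ))) * QD))
      + (∑ x ∈ XXs w, (EEf w x * C) •
        (FF c (B - ∑ h : Fin L, (x h : ℤ))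
          (A - (∑ h : Fin L, (w h : ℤ) - ∑ h : Fin L, (x h : ℤ))) * QD)) = 0 := by
  have hsub : ∀ x : Fin L → ℕ, x ∈ XXs w →
      ∑ h : Fin L, ((w - x) h : ℤ) = ∑ h : Fin L, (w h : ℤ) - ∑ h : Fin L, (x h : ℤ) := by
    intro x hx
    rw [← Finset.sum_sub_distrib]
    refine Finset.sum_congr rfl fun h _ => ?_
    have := mem_XXs.1 hx h
    simp only [Pi.sub_apply]
    omega
  have h2 : ∑ x ∈ XXs w, (EEf w x * C) •
        (FF c (B - ∑ h : Fin L, (x h : ℤ))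
          (A - (∑ h : Fin L, (w h : ℤ) - ∑ h : Fin L, (x h : ℤ))) * QD)
      = ∑ x ∈ XXs w, (EEf w x * C) •
        (FF c (B - (∑ h : Fin L, (w h : ℤ) - ∑ h : Fin L, (x h : ℤ)))
          (A - ∑ h : Fin L, (x h : ℤ)) * QD) := by
    refine Finset.sum_nbij' (fun x => w - x) (fun x => w - x) ?_ ?_ ?_ ?_ ?_
    · intro x hx
      rw [mem_XXs] at hx ⊢
      intro h; have := hx h; simp only [Pi.sub_apply]; omega
    · intro x hx
      rw [mem_XXs] at hx ⊢
      intro h; have := hx h; simp only [Pi.sub_apply]; omega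
    · intro x hx
      rw [mem_XXs] at hx
      funext h; have := hx h; simp only [Pi.sub_apply]; omega
    · intro x hx
      rw [mem_XXs] at hx
      funext h; have := hx h; simp only [Pi.sub_apply]; omega
    · intro x hx
      have hE : EEf w (w - x) = EEf w x := by
        rw [EEf, EEf]
        refine Finset.prod_congr rfl fun h _ => ?_
        have := mem_XXs.1 hx h
        have e1 : (w - x) h = w h - x h := rfl
        have e2 : w h - (w h - x h) = x h := by omega
        rw [e1, e2, mul_comm]
      have hX : ∑ h : Fin L, ((w - x) h : ℤ)
          = ∑ h : Fin L, (w h : ℤ) - ∑ h : Fin L, (x h : ℤ) := hsub x hx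
      rw [hE, hX]
      have e4 : ∑ h : Fin L, (w h : ℤ) - (∑ h : Fin L, (w h : ℤ) - ∑ h : Fin L, (x h : ℤ))
          = ∑ h : Fin L, (x h : ℤ) := by ring
      rw [e4]
  rw [h2, ← Finset.sum_add_distrib]
  have hterm : ∀ x : Fin L → ℕ,
      (EEf w x * C) • (FF c (A - ∑ h : Fin L, (x h : ℤ))
          (B - (∑ h : Fin L, (w h : ℤ) - ∑ h : Fin L, (x h : ℤ))) * QD)
        + (EEf w x * C) • (FF c (B - (∑ h : Fin L, (w h : ℤ) - ∑ h : Fin L, (x h : ℤ)))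
          (A - ∑ h : Fin L, (x h : ℤ)) * QD)
      = ((EEf w x * C) * (sg (A - ∑ h : Fin L, (x h : ℤ))
          + sg (B - (∑ h : Fin L, (w h : ℤ) - ∑ h : Fin L, (x h : ℤ)))))
        • (GG c (A + B - ∑ h : Fin L, (w h : ℤ)) * QD) := by
    intro x
    rw [← smul_add, ← add_mul, Psi c]
    have hn : (A - ∑ h : Fin L, (x h : ℤ))
        + (B - (∑ h : Fin L, (w h : ℤ) - ∑ h : Fin L, (x h : ℤ)))
        = A + B - ∑ h : Fin L, (w h : ℤ) := by ring
    rw [hn, smul_mul_assoc, smul_smul]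
  rw [Finset.sum_congr rfl fun x _ => hterm x, ← Finset.sum_smul]
  by_cases hgg : 2 * (k : ℤ) < A + B - ∑ h : Fin L, (w h : ℤ)
  · rw [GG_eq_zero c k hcneg hrel _ hgg, zero_mul, smul_zero]
  · have hscal : ∑ x ∈ XXs w, (EEf w x * C) * (sg (A - ∑ h : Fin L, (x h : ℤ))
        + sg (B - (∑ h : Fin L, (w h : ℤ) - ∑ h : Fin L, (x h : ℤ)))) = 0 := by
      have hsg : ∀ x : Fin L → ℕ, sg (A - ∑ h : Fin L, (x h : ℤ))
          + sg (B - (∑ h : Fin L, (w h : ℤ) - ∑ h : Fin L, (x h : ℤ)))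
          = (sg A + sg B * sg (∑ h : Fin L, (w h : ℤ))) * sg (∑ h : Fin L, (x h : ℤ)) := by
        intro x
        rw [sg_sub, sg_sub, sg_sub]
        ring
      have hstep : ∑ x ∈ XXs w, (EEf w x * C) * (sg (A - ∑ h : Fin L, (x h : ℤ))
          + sg (B - (∑ h : Fin L, (w h : ℤ) - ∑ h : Fin L, (x h : ℤ))))
          = (C * (sg A + sg B * sg (∑ h : Fin L, (w h : ℤ))))
            * ∑ x ∈ XXs w, EEf w x * sg (∑ h : Fin L, (x h : ℤ)) := by
        rw [Finset.mul_sum]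
        refine Finset.sum_congr rfl fun x _ => ?_
        rw [hsg x]
        ring
      rw [hstep]
      have hfact : ∑ x ∈ XXs w, EEf w x * sg (∑ h : Fin L, (x h : ℤ))
          = ∏ h : Fin L, ∑ t ∈ Finset.range (w h + 1), eps t * eps (w h - t) * (-1 : ℚ) ^ t := by
        have hterm2 : ∀ x : Fin L → ℕ, EEf w x * sg (∑ h : Fin L, (x h : ℤ))
            = ∏ h : Fin L, (eps (x h) * eps (w h - x h) * (-1 : ℚ) ^ (x h)) := by
          intro x
          have h1 : (∑ h : Fin L, (x h : ℤ)) = ((∑ h : Fin L, x h : ℕ) : ℤ) := by push_cast; rfl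
          rw [h1, sg_natCast, ← Finset.prod_pow_eq_pow_sum, EEf, ← Finset.prod_mul_distrib]
        rw [Finset.sum_congr rfl fun x _ => hterm2 x, XXs,
          ← Finset.prod_univ_sum (fun h => Finset.range (w h + 1))
            (fun h t => eps t * eps (w h - t) * (-1 : ℚ) ^ t)]
      rw [hfact]
      have hW1 : ∃ h₀ : Fin L, w h₀ ≠ 0 := by
        by_contra hall
        push_neg at hall
        have : ∑ h : Fin L, (w h : ℤ) = 0 :=
          Finset.sum_eq_zero fun h _ => by rw [hall h]; rfl
        omega
      obtain ⟨h₀, hh₀⟩ := hW1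
      rw [Finset.prod_eq_zero (mem_univ h₀) (eps_id (w h₀) hh₀)]
      ring
    rw [hscal, zero_smul]

end

-- PART 3e : block lemma and main assembly
section
variable {L : ℕ} {R : Type*} [CommRing R] [Algebra ℚ R]
variable {D : Finset (Fin L × Fin L)} {p p' : Fin L}

lemma block (c : ℤ → R) (k : ℕ) (hcneg : ∀ t : ℤ, t < 0 → c t = 0)
    (hrel : ∀ r : ℤ, (k : ℤ) < r →
      c r ^ 2 + 2 * ∑ i ∈ Icc (1 : ℤ) r, (-1) ^ i.toNat * c (r + i) * c (r - i) = 0)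
    (hD : ValidPairs D) (hin : (p, p') ∈ D) (hpp' : (p' : ℕ) = (p : ℕ) + 1)
    (hrows : ∀ h : Fin L, p' < h → ((p, h) ∈ D ↔ (p', h) ∈ D))
    (lam₁ lam₂ : Fin L → ℤ)
    (hoff : ∀ i : Fin L, i ≠ p → i ≠ p' → lam₂ i = lam₁ i)
    (h2p : lam₂ p = lam₁ p') (h2p' : lam₂ p' = lam₁ p)
    (h2k : 2 * (k : ℤ) < lam₁ p + lam₁ p')
    {N : ℕ} (hN₁ : Nb lam₁ ≤ N) (hN₂ : Nb lam₂ ≤ N)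
    {ρ : Fin L → Fin L → ℕ} {w : Fin L → ℕ} (hρ : ρ ∈ PPs p p' N) (hw : w ∈ WWs p N) :
    (∑ x ∈ XXs w, ∑ m ∈ Finset.range (N + 1), gf c D lam₁ (mk p p' ρ x (w - x) m))
      + ∑ x ∈ XXs w, ∑ m ∈ Finset.range (N + 1),
          gf c D lam₂ (mk p p' (swr p p' ρ) x (w - x) m) = 0 := by
  have hρ' := swr_mem hpp' hρ
  have hsub : ∀ x ∈ XXs w, ∑ h : Fin L, ((w - x) h : ℤ)
      = ∑ h : Fin L, (w h : ℤ) - ∑ h : Fin L, (x h : ℤ) := by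
    intro x hx
    rw [← Finset.sum_sub_distrib]
    refine Finset.sum_congr rfl fun h _ => ?_
    have := mem_XXs.1 hx h
    simp only [Pi.sub_apply]
    omega
  have h1 : ∀ x ∈ XXs w, ∑ m ∈ Finset.range (N + 1), gf c D lam₁ (mk p p' ρ x (w - x) m)
      = (EEf w x * coefRD D ρ) •
        (FF c ((lam₁ p + ∑ j : Fin L, (ρ p j : ℤ)) - ∑ h : Fin L, (x h : ℤ))
            ((lam₁ p' + ∑ j : Fin L, (ρ p' j : ℤ))
              - (∑ h : Fin L, (w h : ℤ) - ∑ h : Fin L, (x h : ℤ)))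
          * QQr c p p' lam₁ ρ w) := by
    intro x hx
    rw [B2 c hcneg lam₁ hD hin hpp' hρ hw hx hN₁, hsub x hx]
  have h2 : ∀ x ∈ XXs w, ∑ m ∈ Finset.range (N + 1),
        gf c D lam₂ (mk p p' (swr p p' ρ) x (w - x) m)
      = (EEf w x * coefRD D ρ) •
        (FF c ((lam₁ p' + ∑ j : Fin L, (ρ p' j : ℤ)) - ∑ h : Fin L, (x h : ℤ))
            ((lam₁ p + ∑ j : Fin L, (ρ p j : ℤ))
              - (∑ h : Fin L, (w h : ℤ) - ∑ h : Fin L, (x h : ℤ)))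
          * QQr c p p' lam₁ ρ w) := by
    intro x hx
    rw [B2 c hcneg lam₂ hD hin hpp' hρ' hw hx hN₂, coefRD_swr hrows hpp' hρ,
      QQr_swr c lam₁ lam₂ hoff ρ w, hsub x hx]
    have hr1 : ∑ j : Fin L, (swr p p' ρ p j : ℤ) = ∑ j : Fin L, (ρ p' j : ℤ) :=
      Finset.sum_congr rfl fun j _ => by rw [swr_row_p]
    have hr2 : ∑ j : Fin L, (swr p p' ρ p' j : ℤ) = ∑ j : Fin L, (ρ p j : ℤ) :=
      Finset.sum_congr rfl fun j _ => by rw [swr_row_p']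
    rw [hr1, hr2, h2p, h2p']
  rw [Finset.sum_congr rfl h1, Finset.sum_congr rfl h2]
  refine keyblock c k hcneg hrel (lam₁ p + ∑ j : Fin L, (ρ p j : ℤ))
    (lam₁ p' + ∑ j : Fin L, (ρ p' j : ℤ)) (QQr c p p' lam₁ ρ w) (coefRD D ρ) w ?_
  have t1 : 0 ≤ ∑ j : Fin L, (ρ p j : ℤ) :=
    Finset.sum_nonneg fun j _ => Int.natCast_nonneg _
  have t2 : 0 ≤ ∑ j : Fin L, (ρ p' j : ℤ) :=
    Finset.sum_nonneg fun j _ => Int.natCast_nonneg _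
  linarith

lemma mainsum (c : ℤ → R) (k : ℕ) (hcneg : ∀ t : ℤ, t < 0 → c t = 0)
    (hrel : ∀ r : ℤ, (k : ℤ) < r →
      c r ^ 2 + 2 * ∑ i ∈ Icc (1 : ℤ) r, (-1) ^ i.toNat * c (r + i) * c (r - i) = 0)
    (hD : ValidPairs D) (hin : (p, p') ∈ D) (hpp' : (p' : ℕ) = (p : ℕ) + 1)
    (hrows : ∀ h : Fin L, p' < h → ((p, h) ∈ D ↔ (p', h) ∈ D))
    (lam₁ lam₂ : Fin L → ℤ)
    (hoff : ∀ i : Fin L, i ≠ p → i ≠ p' → lam₂ i = lam₁ i)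
    (h2p : lam₂ p = lam₁ p') (h2p' : lam₂ p' = lam₁ p)
    (h2k : 2 * (k : ℤ) < lam₁ p + lam₁ p') :
    (∑ᶠ nn : Fin L → Fin L → ℕ, gf c D lam₁ nn)
      + (∑ᶠ nn : Fin L → Fin L → ℕ, gf c D lam₂ nn) = 0 := by
  classical
  set N := max (Nb lam₁) (Nb lam₂) with hN
  have hN₁ : Nb lam₁ ≤ N := le_max_left _ _
  have hN₂ : Nb lam₂ ≤ N := le_max_right _ _
  have hs : ∀ lam : Fin L → ℤ, Nb lam ≤ N →
      (∑ᶠ nn : Fin L → Fin L → ℕ, gf c D lam nn) = ∑ nn ∈ TriN L N, gf c D lam nn := by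
    intro lam hNl
    refine finsum_eq_finset_sum_of_support_subset _ fun nn hnn => ?_
    have h := gf_support c hcneg lam nn hnn
    exact Finset.mem_coe.2 (mem_TriN.2 ⟨fun i j => le_trans (h.2 i j) hNl, h.1⟩)
  rw [hs lam₁ hN₁, hs lam₂ hN₂, step2 c lam₁ N hpp', step2 c lam₂ N hpp',
    Finset.sum_congr rfl fun ρ (_ : ρ ∈ PPs p p' N) => step3 c hcneg lam₁ N hN₁ hpp' ρ,
    Finset.sum_congr rfl fun ρ (_ : ρ ∈ PPs p p' N) => step3 c hcneg lam₂ N hN₂ hpp' ρ]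
  have hre : ∑ ρ ∈ PPs p p' N, ∑ wx ∈ (WWs p N).sigma (fun w => XXs w),
        ∑ m ∈ Finset.range (N + 1), gf c D lam₂ (mk p p' ρ wx.2 (wx.1 - wx.2) m)
      = ∑ ρ ∈ PPs p p' N, ∑ wx ∈ (WWs p N).sigma (fun w => XXs w),
        ∑ m ∈ Finset.range (N + 1),
          gf c D lam₂ (mk p p' (swr p p' ρ) wx.2 (wx.1 - wx.2) m) := by
    refine Finset.sum_nbij' (swr p p') (swr p p') (fun ρ hρ => swr_mem hpp' hρ)
      (fun ρ hρ => swr_mem hpp' hρ) (fun ρ _ => swr_invol ρ) (fun ρ _ => swr_invol ρ)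
      (fun ρ hρ => ?_)
    rw [swr_invol]
  rw [hre, ← Finset.sum_add_distrib]
  refine Finset.sum_eq_zero fun ρ hρ => ?_
  rw [Finset.sum_sigma, Finset.sum_sigma, ← Finset.sum_add_distrib]
  refine Finset.sum_eq_zero fun w hw => ?_
  exact block c k hcneg hrel hD hin hpp' hrows lam₁ lam₂ hoff h2p h2p' h2k hN₁ hN₂ hρ hw

end

end

end Stmt9Aux

open Stmt9Aux

open Stmt9 in
theorem stmt9 (R : Type*) [CommRing R] [Algebra ℚ R]
    (k : ℕ) (c : ℤ → R)
    (hc0 : c 0 = 1) (hcneg : ∀ r : ℤ, r < 0 → c r = 0)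
    (hrel : ∀ r : ℤ, (k : ℤ) < r →
      c r ^ 2 + 2 * ∑ i ∈ Finset.Icc (1 : ℤ) r, (-1) ^ i.toNat * c (r + i) * c (r - i) = 0)
    (L : ℕ) (D : Finset (Fin L × Fin L)) (hD : ValidPairs D)
    (p p' : Fin L) (hpp' : (p' : ℕ) = (p : ℕ) + 1)
    (hin : (p, p') ∈ D)
    (hrows : ∀ h : Fin L, p' < h → ((p, h) ∈ D ↔ (p', h) ∈ D))
    (a : Fin L → ℤ) :
    (∀ r s : ℤ, 2 * (k : ℤ) < r + s →
      T c D (Function.update (Function.update a p r) p' s) =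
        - T c D (Function.update (Function.update a p s) p' r)) ∧
    (∀ r : ℤ, (k : ℤ) < r →
      T c D (Function.update (Function.update a p r) p' r) = 0) := by
  have part1 : ∀ r s : ℤ, 2 * (k : ℤ) < r + s →
      T c D (Function.update (Function.update a p r) p' s) =
        - T c D (Function.update (Function.update a p s) p' r) := by
    intro r s hrs
    set lam₁ := Function.update (Function.update a p r) p' s with hlam₁
    set lam₂ := Function.update (Function.update a p s) p' r with hlam₂
    have e₁p : lam₁ p = r := by
      rw [hlam₁, Function.update_of_ne (pne hpp'), Function.update_self]
    have e₁p' : lam₁ p' = s := by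
      rw [hlam₁, Function.update_self]
    have e₂p : lam₂ p = s := by
      rw [hlam₂, Function.update_of_ne (pne hpp'), Function.update_self]
    have e₂p' : lam₂ p' = r := by
      rw [hlam₂, Function.update_self]
    have hoff : ∀ i : Fin L, i ≠ p → i ≠ p' → lam₂ i = lam₁ i := by
      intro i hip hip'
      rw [hlam₁, hlam₂, Function.update_of_ne hip', Function.update_of_ne hip,
        Function.update_of_ne hip', Function.update_of_ne hip]
    have h2p : lam₂ p = lam₁ p' := by rw [e₂p, e₁p']
    have h2p' : lam₂ p' = lam₁ p := by rw [e₂p', e₁p]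
    have h2k : 2 * (k : ℤ) < lam₁ p + lam₁ p' := by
      rw [e₁p, e₁p']; exact hrs
    have hmain := mainsum c k hcneg hrel hD hin hpp' hrows lam₁ lam₂ hoff h2p h2p' h2k
    have hT : ∀ lam : Fin L → ℤ, T c D lam
        = ((2 : ℚ) ^ (D.filter fun q => q.1 = q.2).card)⁻¹ •
          ∑ᶠ nn : Fin L → Fin L → ℕ, gf c D lam nn := fun lam => rfl
    rw [hT lam₁, hT lam₂, eq_neg_of_add_eq_zero_left hmain, smul_neg]
  refine ⟨part1, fun r hr => ?_⟩
  have h := part1 r r (by omega)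
  have h2 : (2 : ℚ) • T c D (Function.update (Function.update a p r) p' r) = 0 := by
    rw [two_smul]
    nth_rewrite 1 [h]
    exact neg_add_cancel _
  exact qsmul_eq_zero two_ne_zero h2
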